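/- Let n ≥ 1, r ≥ 1 and let q = x_0^2 + x_1^2 + ⋯ + x_{n-2}^2 + x_{n-1}·x_n ∈ ℂ[x_0,…,x_n]. Then the ℂ-linear span of the iterated partial derivatives ∂^α(q^r), as α ranges over all multi-indices in ℕ^{n+1} of total degree |α| = r, equals the space of all homogeneous polynomials of degree r in x_0,…,x_n. In particular this span has dimension binom(n+r, n), i.e. the catalecticant rank of q^r in order r is binom(n+r, n). -/

import Mathlib

open MvPolynomial

/-- Iterated partial derivative `∂^α f`: `MvPolynomial.pderiv i` is applied `α i` times
for each variable `i`. -/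
noncomputable def pdPow {n : ℕ} (α : Fin n →₀ ℕ) (f : MvPolynomial (Fin n) ℂ) :
    MvPolynomial (Fin n) ℂ :=
  (List.finRange n).foldr (fun i g => (fun h => MvPolynomial.pderiv i h)^[α i] g) f

/-- The quadric `q = x_0^2 + ⋯ + x_{n-2}^2 + x_{n-1}·x_n` in `ℂ[x_0,…,x_n]`. -/
noncomputable def qForm (n : ℕ) : MvPolynomial (Fin (n + 1)) ℂ :=
  (∑ i ∈ Finset.univ.filter (fun i : Fin (n + 1) => (i : ℕ) + 2 ≤ n), X i ^ 2)
    + X (⟨n - 1, by omega⟩ : Fin (n + 1)) * X (⟨n, by omega⟩ : Fin (n + 1))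

namespace PdAux


variable {N : ℕ}

/-- generalized foldr version over an arbitrary list -/
noncomputable def D (α : Fin N →₀ ℕ) (L : List (Fin N)) (f : MvPolynomial (Fin N) ℂ) :
    MvPolynomial (Fin N) ℂ :=
  L.foldr (fun i g => (fun h => MvPolynomial.pderiv i h)^[α i] g) f

lemma pdPow_eq_D (α : Fin N →₀ ℕ) (f : MvPolynomial (Fin N) ℂ) :
    pdPow α f = D α (List.finRange N) f := rfl

lemma iter_add (i : Fin N) (k : ℕ) (f g : MvPolynomial (Fin N) ℂ) :
    (fun h => MvPolynomial.pderiv i h)^[k] (f + g)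
      = (fun h => MvPolynomial.pderiv i h)^[k] f + (fun h => MvPolynomial.pderiv i h)^[k] g := by
  induction k generalizing f g with
  | zero => simp
  | succ k ih => simp [Function.iterate_succ_apply, map_add, ih]

lemma iter_smul (i : Fin N) (k : ℕ) (c : ℂ) (f : MvPolynomial (Fin N) ℂ) :
    (fun h => MvPolynomial.pderiv i h)^[k] (c • f)
      = c • (fun h => MvPolynomial.pderiv i h)^[k] f := by
  induction k generalizing f with
  | zero => simp
  | succ k ih => simp [Function.iterate_succ_apply, map_smul, ih]

lemma D_add (α : Fin N →₀ ℕ) (L : List (Fin N)) (f g : MvPolynomial (Fin N) ℂ) :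
    D α L (f + g) = D α L f + D α L g := by
  induction L with
  | nil => rfl
  | cons i L ih =>
    show (fun h => MvPolynomial.pderiv i h)^[α i] (D α L (f + g)) = _
    rw [ih, iter_add]
    rfl

lemma D_smul (α : Fin N →₀ ℕ) (L : List (Fin N)) (c : ℂ) (f : MvPolynomial (Fin N) ℂ) :
    D α L (c • f) = c • D α L f := by
  induction L with
  | nil => rfl
  | cons i L ih =>
    show (fun h => MvPolynomial.pderiv i h)^[α i] (D α L (c • f)) = _
    rw [ih, iter_smul]
    rfl

lemma pdPow_add_poly (α : Fin N →₀ ℕ) (f g : MvPolynomial (Fin N) ℂ) :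
    pdPow α (f + g) = pdPow α f + pdPow α g := D_add α _ f g

lemma pdPow_smul (α : Fin N →₀ ℕ) (c : ℂ) (f : MvPolynomial (Fin N) ℂ) :
    pdPow α (c • f) = c • pdPow α f := D_smul α _ c f

lemma iter_monomial (i : Fin N) (k : ℕ) (β : Fin N →₀ ℕ) (c : ℂ) :
    (fun h => MvPolynomial.pderiv i h)^[k] (monomial β c)
      = ((β i).descFactorial k) • monomial (β - Finsupp.single i k) c := by
  induction k with
  | zero => simp
  | succ k ih =>
    rw [Function.iterate_succ_apply', ih, map_nsmul, pderiv_monomial]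
    have h1 : (β - Finsupp.single i k) i = β i - k := by simp
    have h2 : β - Finsupp.single i k - Finsupp.single i 1 = β - Finsupp.single i (k + 1) := by
      ext j
      rcases eq_or_ne j i with rfl | hj
      · simp [Finsupp.single_apply]; omega
      · simp [Finsupp.single_apply, Ne.symm hj]
    rw [h1, h2]
    have : (monomial (β - Finsupp.single i (k+1))) (c * ((β i - k : ℕ) : ℂ))
        = (β i - k) • (monomial (β - Finsupp.single i (k+1))) c := by
      rw [← Nat.cast_smul_eq_nsmul ℂ, smul_monomial, smul_eq_mul, mul_comm]
    rw [this, smul_smul, Nat.descFactorial_succ, mul_comm]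



variable {N : ℕ}

/-- partial multi-index accumulated along a list -/
noncomputable def acc (α : Fin N →₀ ℕ) (L : List (Fin N)) : Fin N →₀ ℕ :=
  L.foldr (fun i s => Finsupp.single i (α i) + s) 0

lemma acc_nil (α : Fin N →₀ ℕ) : acc α [] = 0 := rfl

lemma acc_cons (α : Fin N →₀ ℕ) (i : Fin N) (L : List (Fin N)) :
    acc α (i :: L) = Finsupp.single i (α i) + acc α L := rfl

lemma acc_not_mem (α : Fin N →₀ ℕ) {L : List (Fin N)} {j : Fin N} (h : j ∉ L) :
    acc α L j = 0 := by
  induction L with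
  | nil => simp [acc_nil]
  | cons i L ih =>
    rw [acc_cons, Finsupp.add_apply, Finsupp.single_apply,
      if_neg (by rintro rfl; exact h List.mem_cons_self),
      ih (fun hm => h (List.mem_cons_of_mem _ hm))]

lemma acc_mem (α : Fin N →₀ ℕ) {L : List (Fin N)} (hL : L.Nodup) {j : Fin N} (h : j ∈ L) :
    acc α L j = α j := by
  induction L with
  | nil => simp at h
  | cons i L ih =>
    rw [acc_cons, Finsupp.add_apply]
    rcases List.mem_cons.1 h with rfl | hm
    · rw [Finsupp.single_apply, if_pos rfl, acc_not_mem α (List.nodup_cons.1 hL).1, add_zero]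
    · rw [Finsupp.single_apply,
        if_neg (by rintro rfl; exact (List.nodup_cons.1 hL).1 hm), zero_add]
      exact ih (List.nodup_cons.1 hL).2 hm

lemma acc_finRange (α : Fin N →₀ ℕ) : acc α (List.finRange N) = α := by
  ext j; exact acc_mem α (List.nodup_finRange N) (List.mem_finRange j)


lemma iter_smul_nat {N : ℕ} (i : Fin N) (k m : ℕ) (f : MvPolynomial (Fin N) ℂ) :
    (fun h => MvPolynomial.pderiv i h)^[k] (m • f)
      = m • (fun h => MvPolynomial.pderiv i h)^[k] f := by
  rw [← Nat.cast_smul_eq_nsmul ℂ, ← Nat.cast_smul_eq_nsmul ℂ, iter_smul]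

lemma D_monomial (α : Fin N →₀ ℕ) (c : ℂ) (L : List (Fin N)) (hL : L.Nodup) (β : Fin N →₀ ℕ) :
    D α L (monomial β c) =
      ((L.map fun i => (β i).descFactorial (α i)).prod) • monomial (β - acc α L) c := by
  induction L with
  | nil => simp [D, acc]
  | cons i L ih =>
    have hi : i ∉ L := (List.nodup_cons.1 hL).1
    show (fun h => MvPolynomial.pderiv i h)^[α i] (D α L (monomial β c)) = _
    rw [ih (List.nodup_cons.1 hL).2, iter_smul_nat, iter_monomial]
    have h1 : (β - acc α L) i = β i := by
      rw [Finsupp.tsub_apply, acc_not_mem α hi, Nat.sub_zero]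
    rw [h1, smul_smul, List.map_cons, List.prod_cons, mul_comm, tsub_tsub, add_comm (acc α L),
      ← acc_cons]

lemma pdPow_monomial (α β : Fin N →₀ ℕ) (c : ℂ) :
    pdPow α (monomial β c) = (∏ i, (β i).descFactorial (α i)) • monomial (β - α) c := by
  have h := D_monomial α c (List.finRange N) (List.nodup_finRange N) β
  have hacc : acc α (List.finRange N) = α := acc_finRange α
  rw [Fin.prod_univ_def]
  rw [show pdPow α (monomial β c) = D α (List.finRange N) (monomial β c) from rfl, h, hacc]



variable {N : ℕ}

lemma pdPow_smul_nat (α : Fin N →₀ ℕ) (m : ℕ) (f : MvPolynomial (Fin N) ℂ) :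
    pdPow α (m • f) = m • pdPow α f := by
  rw [← Nat.cast_smul_eq_nsmul ℂ, ← Nat.cast_smul_eq_nsmul ℂ, pdPow_smul]

lemma pdPow_pdPow (α γ : Fin N →₀ ℕ) (f : MvPolynomial (Fin N) ℂ) :
    pdPow (α + γ) f = pdPow γ (pdPow α f) := by
  induction f using MvPolynomial.induction_on' with
  | add p q hp hq => rw [pdPow_add_poly, pdPow_add_poly, pdPow_add_poly, hp, hq]
  | monomial u a =>
    rw [pdPow_monomial, pdPow_monomial, pdPow_smul_nat, pdPow_monomial, smul_smul, tsub_tsub]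
    congr 1
    rw [← Finset.prod_mul_distrib]
    apply Finset.prod_congr rfl
    intro i _
    rw [Finsupp.add_apply, Finsupp.tsub_apply]
    have := Nat.descFactorial_mul_descFactorial (k := α i) (m := α i + γ i) (n := u i)
      (Nat.le_add_right _ _)
    rw [Nat.add_sub_cancel_left] at this
    rw [← this, mul_comm]

lemma pdPow_single (j : Fin N) (k : ℕ) (f : MvPolynomial (Fin N) ℂ) :
    pdPow (Finsupp.single j k) f = (fun h => MvPolynomial.pderiv j h)^[k] f := by
  induction f using MvPolynomial.induction_on' with
  | add p q hp hq => rw [pdPow_add_poly, iter_add, hp, hq]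
  | monomial u a =>
    rw [pdPow_monomial, iter_monomial]
    congr 1
    rw [Finset.prod_eq_single j (fun i _ hi => by
      rw [Finsupp.single_apply, if_neg (Ne.symm hi), Nat.descFactorial_zero])
      (fun h => absurd (Finset.mem_univ j) h)]
    rw [Finsupp.single_apply, if_pos rfl]

lemma pdPow_single_one (j : Fin N) (f : MvPolynomial (Fin N) ℂ) :
    pdPow (Finsupp.single j 1) f = MvPolynomial.pderiv j f := by
  rw [pdPow_single]; rfl

lemma pdPow_X_mul_of_eq_zero {α : Fin N →₀ ℕ} {j : Fin N} (hj : α j = 0)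
    (f : MvPolynomial (Fin N) ℂ) :
    pdPow α (X j * f) = X j * pdPow α f := by
  induction f using MvPolynomial.induction_on' with
  | add p q hp hq => rw [mul_add, pdPow_add_poly, hp, hq, pdPow_add_poly, mul_add]
  | monomial u a =>
    rw [show (X j : MvPolynomial (Fin N) ℂ) * monomial u a = X j ^ 1 * monomial u a by ring,
      ← monomial_single_add, pdPow_monomial, pdPow_monomial, mul_smul_comm,
      show (X j : MvPolynomial (Fin N) ℂ) * monomial (u - α) a = X j ^ 1 * monomial (u - α) a
        by ring, ← monomial_single_add]
    have he : (Finsupp.single j 1 + u) - α = Finsupp.single j 1 + (u - α) := by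
      apply Finsupp.ext; intro i
      rcases eq_or_ne i j with rfl | hi
      · simp [hj]
      · simp [Finsupp.single_apply, Ne.symm hi]
    have hp : (∏ i : Fin N, ((Finsupp.single j 1 + u : Fin N →₀ ℕ) i).descFactorial (α i))
        = ∏ i, (u i).descFactorial (α i) := by
      apply Finset.prod_congr rfl
      intro i _
      rcases eq_or_ne i j with rfl | hi
      · rw [hj, Nat.descFactorial_zero, Nat.descFactorial_zero]
      · rw [Finsupp.add_apply, Finsupp.single_apply, if_neg (Ne.symm hi), zero_add]
    rw [he, hp]

lemma iter_X_mul (j : Fin N) (k : ℕ) (f : MvPolynomial (Fin N) ℂ) :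
    (fun h => MvPolynomial.pderiv j h)^[k] (X j * f)
      = X j * (fun h => MvPolynomial.pderiv j h)^[k] f
        + k • (fun h => MvPolynomial.pderiv j h)^[k - 1] f := by
  induction k with
  | zero => simp
  | succ k ih =>
    rw [Function.iterate_succ_apply', ih, map_add, map_nsmul, pderiv_mul, pderiv_X_self, one_mul]
    have h2 : (MvPolynomial.pderiv j) ((fun h => MvPolynomial.pderiv j h)^[k] f)
        = (fun h => MvPolynomial.pderiv j h)^[k + 1] f := by
      rw [Function.iterate_succ_apply']
    have h1 : (MvPolynomial.pderiv j) ((fun h => MvPolynomial.pderiv j h)^[k - 1] f)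
        = (fun h => MvPolynomial.pderiv j h)^[k - 1 + 1] f := by
      rw [Function.iterate_succ_apply']
    rw [h1, h2]
    cases k with
    | zero => simp; exact add_comm _ _
    | succ s =>
      have e1 : s + 1 - 1 + 1 = s + 1 := rfl
      rw [e1, Nat.succ_sub_one]
      module

lemma pdPow_X_mul (α : Fin N →₀ ℕ) (j : Fin N) (f : MvPolynomial (Fin N) ℂ) :
    pdPow α (X j * f) = X j * pdPow α f
      + (α j) • pdPow (α - Finsupp.single j 1) f := by
  rcases Nat.eq_zero_or_pos (α j) with hj | hj
  · rw [hj, zero_smul, add_zero, pdPow_X_mul_of_eq_zero hj]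
  · obtain ⟨s, hs⟩ : ∃ s, α j = s + 1 := ⟨α j - 1, by omega⟩
    set rest := Finsupp.erase j α with hrest
    have hrj : rest j = 0 := Finsupp.erase_same
    have hα : α = Finsupp.single j (α j) + rest := by
      ext i
      rcases eq_or_ne i j with rfl | hi
      · simp [hrest, Finsupp.single_apply]
      · simp [hrest, Finsupp.single_apply, Ne.symm hi, Finsupp.erase_ne hi]
    have hα1 : α - Finsupp.single j 1 = Finsupp.single j s + rest := by
      ext i
      rcases eq_or_ne i j with rfl | hi
      · simp [hrest, Finsupp.single_apply]; omega
      · simp [hrest, Finsupp.single_apply, Ne.symm hi, Finsupp.erase_ne hi]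
    calc pdPow α (X j * f) = pdPow (Finsupp.single j (α j) + rest) (X j * f) := by rw [← hα]
      _ = pdPow rest (pdPow (Finsupp.single j (α j)) (X j * f)) := pdPow_pdPow _ _ _
      _ = pdPow rest ((fun h => MvPolynomial.pderiv j h)^[α j] (X j * f)) := by rw [pdPow_single]
      _ = pdPow rest (X j * (fun h => MvPolynomial.pderiv j h)^[α j] f)
            + (α j) • pdPow rest ((fun h => MvPolynomial.pderiv j h)^[α j - 1] f) := by
          rw [iter_X_mul, pdPow_add_poly, pdPow_smul_nat]
      _ = X j * pdPow α f + (α j) • pdPow (α - Finsupp.single j 1) f := by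
          rw [pdPow_X_mul_of_eq_zero hrj, ← pdPow_single, ← pdPow_pdPow, ← hα,
            ← pdPow_single j (α j - 1), ← pdPow_pdPow]
          congr 3
          rw [hα1, hs]
          simp



variable {n : ℕ}

lemma pdPow_zero_poly (α : Fin N →₀ ℕ) : pdPow α (0 : MvPolynomial (Fin N) ℂ) = 0 := by
  have := pdPow_smul α 0 0
  simpa using this

lemma pdPow_sum (α : Fin N →₀ ℕ) {ι : Type*} (s : Finset ι) (g : ι → MvPolynomial (Fin N) ℂ) :
    pdPow α (∑ x ∈ s, g x) = ∑ x ∈ s, pdPow α (g x) := by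
  classical
  induction s using Finset.induction_on with
  | empty => simpa using pdPow_zero_poly α
  | insert _ _ hx ih =>
    rw [Finset.sum_insert hx, pdPow_add_poly, ih, Finset.sum_insert hx]

lemma degree_univ_sum (d : Fin N →₀ ℕ) : d.degree = ∑ i, d i := by
  rw [Finsupp.degree]
  exact Finset.sum_subset (Finset.subset_univ _)
    (fun i _ hi => Finsupp.notMem_support_iff.1 hi)

lemma pdPow_isHomogeneous {f : MvPolynomial (Fin N) ℂ} {Dg m : ℕ} (hf : f.IsHomogeneous Dg)
    (α : Fin N →₀ ℕ) (hk : (∑ i, α i) + m = Dg) : (pdPow α f).IsHomogeneous m := by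
  rw [← mem_homogeneousSubmodule]
  rw [show pdPow α f = pdPow α (∑ v ∈ f.support, monomial v (coeff v f)) from by
    rw [← f.as_sum], pdPow_sum]
  apply Submodule.sum_mem
  intro v hv
  rw [pdPow_monomial]
  rcases eq_or_ne (∏ i, (v i).descFactorial (α i)) 0 with h0 | h0
  · rw [h0, zero_smul]; exact Submodule.zero_mem _
  · rw [← Nat.cast_smul_eq_nsmul ℂ]
    apply Submodule.smul_mem
    rw [mem_homogeneousSubmodule]
    have hle : ∀ i, α i ≤ v i := by
      intro i
      by_contra hlt
      push_neg at hlt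
      exact h0 (Finset.prod_eq_zero (Finset.mem_univ i) (Nat.descFactorial_of_lt hlt))
    apply isHomogeneous_monomial
    have hv' : v.degree = Dg := by
      have hcoeff : coeff v f ≠ 0 := mem_support_iff.1 hv
      have := hf hcoeff
      rwa [Finsupp.degree_eq_weight_one]
    rw [degree_univ_sum] at hv' ⊢
    have hsplit : (∑ i, (v - α) i) + (∑ i, α i) = ∑ i, v i := by
      rw [← Finset.sum_add_distrib]
      exact Finset.sum_congr rfl (fun i _ => by
        have := hle i
        rw [Finsupp.tsub_apply]; omega)
    omega

def uIdx (n : ℕ) : Fin (n+1) := ⟨n - 1, by omega⟩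
def vIdx (n : ℕ) : Fin (n+1) := ⟨n, by omega⟩
noncomputable def SIdx (n : ℕ) : Finset (Fin (n+1)) :=
  Finset.univ.filter (fun i : Fin (n+1) => (i : ℕ) + 2 ≤ n)

lemma qForm_eq (n : ℕ) :
    qForm n = (∑ i ∈ SIdx n, X i ^ 2) + X (uIdx n) * X (vIdx n) := rfl

lemma mem_SIdx {i : Fin (n+1)} : i ∈ SIdx n ↔ (i : ℕ) + 2 ≤ n := by
  simp [SIdx]

lemma u_ne_v (hn : 1 ≤ n) : uIdx n ≠ vIdx n := by
  simp only [uIdx, vIdx, Ne, Fin.mk.injEq]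
  omega

lemma u_not_mem_S : uIdx n ∉ SIdx n := by
  rw [mem_SIdx]; simp [uIdx]; omega

lemma v_not_mem_S : vIdx n ∉ SIdx n := by
  rw [mem_SIdx]; simp [vIdx]

lemma ne_u_of_mem_S {i : Fin (n+1)} (hi : i ∈ SIdx n) : i ≠ uIdx n :=
  fun h => u_not_mem_S (h ▸ hi)

lemma ne_v_of_mem_S {i : Fin (n+1)} (hi : i ∈ SIdx n) : i ≠ vIdx n :=
  fun h => v_not_mem_S (h ▸ hi)

lemma trichot (j : Fin (n+1)) : j ∈ SIdx n ∨ j = uIdx n ∨ j = vIdx n := by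
  rcases le_or_gt ((j : ℕ) + 2) n with h | h
  · exact Or.inl (mem_SIdx.2 h)
  · have hj := j.isLt
    right
    rcases Nat.lt_or_ge (j : ℕ) n with h2 | h2
    · left; apply Fin.ext; simp [uIdx]; omega
    · right; apply Fin.ext; simp [vIdx]; omega

lemma card_SIdx : (SIdx n).card = n - 1 := by
  have : SIdx n = Finset.image (fun i : Fin (n-1) => Fin.castLE (by omega) i) Finset.univ := by
    ext j
    simp only [mem_SIdx, Finset.mem_image, Finset.mem_univ, true_and]
    constructor
    · intro hj
      exact ⟨⟨(j : ℕ), by omega⟩, Fin.ext rfl⟩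
    · rintro ⟨i, rfl⟩
      have := i.isLt
      simp [Fin.castLE]
      omega
  rw [this, Finset.card_image_of_injective _ (Fin.castLE_injective _), Finset.card_univ,
    Fintype.card_fin]

lemma pderiv_q_S {i : Fin (n+1)} (hi : i ∈ SIdx n) :
    pderiv i (qForm n) = 2 * X i := by
  rw [qForm_eq, map_add, map_sum, pderiv_mul,
    pderiv_X_of_ne (Ne.symm (ne_u_of_mem_S hi)), pderiv_X_of_ne (Ne.symm (ne_v_of_mem_S hi))]
  rw [Finset.sum_eq_single_of_mem i hi (fun b _ hb => by
    rw [pderiv_pow, pderiv_X_of_ne hb, mul_zero])]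
  rw [pderiv_pow, pderiv_X_self]
  push_cast
  ring

lemma pderiv_q_u (hn : 1 ≤ n) : pderiv (uIdx n) (qForm n) = X (vIdx n) := by
  rw [qForm_eq, map_add, map_sum, pderiv_mul, pderiv_X_self,
    pderiv_X_of_ne (Ne.symm (u_ne_v hn))]
  rw [Finset.sum_eq_zero (fun b hb => by
    rw [pderiv_pow, pderiv_X_of_ne (ne_u_of_mem_S hb), mul_zero])]
  ring

lemma pderiv_q_v (hn : 1 ≤ n) : pderiv (vIdx n) (qForm n) = X (uIdx n) := by
  rw [qForm_eq, map_add, map_sum, pderiv_mul, pderiv_X_self,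
    pderiv_X_of_ne (u_ne_v hn)]
  rw [Finset.sum_eq_zero (fun b hb => by
    rw [pderiv_pow, pderiv_X_of_ne (ne_v_of_mem_S hb), mul_zero])]
  ring


lemma pdPow_single_two {N : ℕ} (j : Fin N) (f : MvPolynomial (Fin N) ℂ) :
    pdPow (Finsupp.single j 2) f = pderiv j (pderiv j f) := by
  rw [pdPow_single]; rfl

lemma pdPow_pair {N : ℕ} (a b : Fin N) (f : MvPolynomial (Fin N) ℂ) :
    pdPow (Finsupp.single a 1 + Finsupp.single b 1) f = pderiv b (pderiv a f) := by
  rw [pdPow_pdPow, pdPow_single, pdPow_single]; rfl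

lemma pderiv_natCast {N : ℕ} (i : Fin N) (k : ℕ) :
    pderiv i ((k : MvPolynomial (Fin N) ℂ)) = 0 := by
  rw [← map_natCast (C : ℂ →+* MvPolynomial (Fin N) ℂ) k, pderiv_C]

lemma pderiv_two {N : ℕ} (i : Fin N) :
    pderiv i ((2 : MvPolynomial (Fin N) ℂ)) = 0 := by
  rw [← map_ofNat (C : ℂ →+* MvPolynomial (Fin N) ℂ) 2, pderiv_C]

lemma second_S {i : Fin (n+1)} (hi : i ∈ SIdx n) (M : ℕ) :
    pderiv i (pderiv i (qForm n ^ (M+1)))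
      = ((M+1)*M*4) • (qForm n ^ (M-1) * X i ^ 2) + ((M+1)*2) • qForm n ^ M := by
  rw [pderiv_pow, pderiv_q_S hi, Nat.add_sub_cancel, pderiv_mul, pderiv_mul, pderiv_natCast,
    pderiv_pow, pderiv_q_S hi, pderiv_mul, pderiv_two, pderiv_X_self]
  rw [nsmul_eq_mul, nsmul_eq_mul]
  push_cast
  ring

lemma second_uv (hn : 1 ≤ n) (M : ℕ) :
    pderiv (vIdx n) (pderiv (uIdx n) (qForm n ^ (M+1)))
      = ((M+1)*M) • (qForm n ^ (M-1) * (X (uIdx n) * X (vIdx n))) + (M+1) • qForm n ^ M := by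
  rw [pderiv_pow, pderiv_q_u hn, Nat.add_sub_cancel, pderiv_mul, pderiv_mul, pderiv_natCast,
    pderiv_pow, pderiv_q_v hn, pderiv_X_self]
  rw [nsmul_eq_mul, nsmul_eq_mul]
  push_cast
  ring

lemma pow_pred_mul (M : ℕ) (k : ℕ) (x : MvPolynomial (Fin (n+1)) ℂ) :
    ((k * M) • (x ^ (M-1) * x)) = (k * M) • x ^ M := by
  cases M with
  | zero => simp
  | succ s => rw [Nat.add_sub_cancel, ← pow_succ]

lemma lap (hn : 1 ≤ n) (M : ℕ) :
    (∑ i ∈ SIdx n, pdPow (Finsupp.single i 2) (qForm n ^ (M+1)))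
      + 4 • pdPow (Finsupp.single (uIdx n) 1 + Finsupp.single (vIdx n) 1) (qForm n ^ (M+1))
    = (2*(M+1)*(n+2*M+1)) • qForm n ^ M := by
  rw [pdPow_pair, second_uv hn M]
  rw [Finset.sum_congr rfl (fun i hi => by rw [pdPow_single_two, second_S hi M])]
  rw [Finset.sum_add_distrib, Finset.sum_const, card_SIdx, ← Finset.smul_sum, ← Finset.mul_sum]
  rw [smul_add, smul_smul, smul_smul, smul_smul]
  have key : ((M+1)*M*4) • (qForm n ^ (M-1) * ∑ i ∈ SIdx n, X i ^ 2)
      + (4*((M+1)*M)) • (qForm n ^ (M-1) * (X (uIdx n) * X (vIdx n)))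
      = ((M+1)*M*4) • (qForm n ^ (M-1) * qForm n) := by
    rw [show (4*((M+1)*M)) = (M+1)*M*4 by ring, ← smul_add, ← mul_add, ← qForm_eq]
  have comb : ∀ (a b c : ℕ) (x : MvPolynomial (Fin (n+1)) ℂ),
      a • x + b • x + c • x = (a + b + c) • x := by
    intro a b c x
    rw [← add_nsmul, ← add_nsmul]
  calc ((M+1)*M*4) • (qForm n ^ (M-1) * ∑ i ∈ SIdx n, X i ^ 2)
        + ((n-1) * ((M+1)*2)) • qForm n ^ M
        + ((4*((M+1)*M)) • (qForm n ^ (M-1) * (X (uIdx n) * X (vIdx n)))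
            + (4*(M+1)) • qForm n ^ M)
      = (((M+1)*M*4) • (qForm n ^ (M-1) * qForm n))
          + ((n-1) * ((M+1)*2)) • qForm n ^ M + (4*(M+1)) • qForm n ^ M := by
        rw [← key]
        abel
    _ = (2*(M+1)*(n+2*M+1)) • qForm n ^ M := by
        rw [show (M+1)*M*4 = ((M+1)*4)*M by ring, pow_pred_mul M ((M+1)*4), comb]
        congr 1
        obtain ⟨t, rfl⟩ : ∃ t, n = t + 1 := ⟨n - 1, by omega⟩
        simp only [Nat.add_sub_cancel]
        ring



noncomputable def T (n m : ℕ) : Submodule ℂ (MvPolynomial (Fin (n+1)) ℂ) :=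
  Submodule.span ℂ {p : MvPolynomial (Fin (n+1)) ℂ |
    ∃ α : Fin (n+1) →₀ ℕ, (∑ i, α i) = m ∧ p = pdPow α (qForm n ^ m)}

lemma wt_add {N : ℕ} (a b : Fin N →₀ ℕ) :
    (∑ i, (a + b) i) = (∑ i, a i) + (∑ i, b i) := by
  simp [Finsupp.add_apply, Finset.sum_add_distrib]

lemma wt_single {N : ℕ} (j : Fin N) (c : ℕ) : (∑ i, (Finsupp.single j c) i) = c := by
  rw [Finset.sum_eq_single j (fun i _ hi => Finsupp.single_eq_of_ne' (Ne.symm hi))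
    (fun h => absurd (Finset.mem_univ j) h), Finsupp.single_eq_same]

lemma W_mem (hn : 1 ≤ n) {m : ℕ} {δ : Fin (n+1) →₀ ℕ} (hδ : (∑ i, δ i) + 1 = m) :
    pdPow δ (qForm n ^ m) ∈ T n (m+1) := by
  have hc : ((2*(m+1)*(n+2*m+1) : ℕ) : ℂ) ≠ 0 := by
    rw [Nat.cast_ne_zero]
    positivity
  have hl := lap hn m
  have expand : (2*(m+1)*(n+2*m+1)) • pdPow δ (qForm n ^ m)
      = ∑ i ∈ SIdx n, pdPow (Finsupp.single i 2 + δ) (qForm n ^ (m+1))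
        + 4 • pdPow ((Finsupp.single (uIdx n) 1 + Finsupp.single (vIdx n) 1) + δ)
            (qForm n ^ (m+1)) := by
    rw [← pdPow_smul_nat, ← hl, pdPow_add_poly, pdPow_sum, pdPow_smul_nat]
    congr 1
    · exact Finset.sum_congr rfl (fun i _ => (pdPow_pdPow _ δ _).symm)
    · rw [← pdPow_pdPow]
  have hmem : ∑ i ∈ SIdx n, pdPow (Finsupp.single i 2 + δ) (qForm n ^ (m+1))
      + 4 • pdPow ((Finsupp.single (uIdx n) 1 + Finsupp.single (vIdx n) 1) + δ)
          (qForm n ^ (m+1)) ∈ T n (m+1) := by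
    apply Submodule.add_mem
    · apply Submodule.sum_mem
      intro i _
      apply Submodule.subset_span
      exact ⟨Finsupp.single i 2 + δ, by rw [wt_add, wt_single]; omega, rfl⟩
    · rw [← Nat.cast_smul_eq_nsmul ℂ]
      apply Submodule.smul_mem
      apply Submodule.subset_span
      exact ⟨_, by rw [wt_add, wt_add, wt_single, wt_single]; omega, rfl⟩
  have heq : pdPow δ (qForm n ^ m)
      = ((2*(m+1)*(n+2*m+1) : ℕ) : ℂ)⁻¹
          • ((2*(m+1)*(n+2*m+1) : ℕ) • pdPow δ (qForm n ^ m)) := by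
    rw [← Nat.cast_smul_eq_nsmul ℂ, inv_smul_smul₀ hc]
  rw [heq, expand]
  exact Submodule.smul_mem _ _ hmem

lemma X_mul_mem (hn : 1 ≤ n) {m : ℕ} {α : Fin (n+1) →₀ ℕ} (hα : (∑ i, α i) = m)
    (j : Fin (n+1)) :
    X j * pdPow α (qForm n ^ m) ∈ T n (m+1) := by
  obtain ⟨i, c, hc0, hder⟩ : ∃ (i : Fin (n+1)) (c : ℂ), c ≠ 0
      ∧ pderiv i (qForm n) = c • X j := by
    rcases trichot j with hj | hj | hj
    · exact ⟨j, 2, two_ne_zero, by rw [pderiv_q_S hj, ← C_mul', map_ofNat]⟩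
    · exact ⟨vIdx n, 1, one_ne_zero, by rw [pderiv_q_v hn, hj, one_smul]⟩
    · exact ⟨uIdx n, 1, one_ne_zero, by rw [pderiv_q_u hn, hj, one_smul]⟩
  set q := qForm n with hq
  set P := pdPow α (q ^ m) with hP
  set Q := pdPow (α - Finsupp.single j 1) (q ^ m) with hQ
  have hmain : pdPow (Finsupp.single i 1 + α) (q ^ (m+1))
      = (((m+1 : ℕ) : ℂ) * c) • (X j * P + (α j) • Q) := by
    rw [pdPow_pdPow, pdPow_single_one, pderiv_pow, hder, Nat.add_sub_cancel]
    have harg : ((m+1 : ℕ) : MvPolynomial (Fin (n+1)) ℂ) * q ^ m * (c • X j)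
        = (((m+1 : ℕ) : ℂ) * c) • (X j * q ^ m) := by
      rw [← map_natCast (C : ℂ →+* MvPolynomial (Fin (n+1)) ℂ) (m+1), C_mul',
        smul_mul_smul_comm, mul_comm (q ^ m)]
    rw [harg, pdPow_smul, pdPow_X_mul]
  have hsplit : (((m+1 : ℕ) : ℂ) * c) • (X j * P)
      = pdPow (Finsupp.single i 1 + α) (q ^ (m+1))
        - (((m+1 : ℕ) : ℂ) * c) • ((α j) • Q) := by
    rw [hmain, smul_add]
    abel
  have hk : (((m+1 : ℕ) : ℂ) * c) ≠ 0 := by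
    apply mul_ne_zero _ hc0
    rw [Nat.cast_ne_zero]
    omega
  rw [← Submodule.smul_mem_iff _ hk, hsplit]
  apply Submodule.sub_mem
  · apply Submodule.subset_span
    exact ⟨_, by rw [wt_add, wt_single]; omega, rfl⟩
  · apply Submodule.smul_mem
    rcases Nat.eq_zero_or_pos (α j) with h0 | h0
    · rw [h0, zero_smul]
      exact Submodule.zero_mem _
    · rw [← Nat.cast_smul_eq_nsmul ℂ]
      apply Submodule.smul_mem
      apply W_mem hn
      have : (∑ i', (α - Finsupp.single j 1 : Fin (n+1) →₀ ℕ) i')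
          + (∑ i', (Finsupp.single j 1 : Fin (n+1) →₀ ℕ) i')
          = ∑ i', α i' := by
        rw [← Finset.sum_add_distrib]
        apply Finset.sum_congr rfl
        intro x _
        rw [Finsupp.tsub_apply, Finsupp.single_apply]
        by_cases hx : j = x
        · rw [if_pos hx]
          subst hx
          omega
        · rw [if_neg hx]
          omega
      rw [wt_single] at this
      omega


lemma qForm_isHomogeneous : (qForm n).IsHomogeneous 2 := by
  rw [← mem_homogeneousSubmodule, qForm_eq]
  apply Submodule.add_mem
  · apply Submodule.sum_mem
    intro i _
    rw [mem_homogeneousSubmodule]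
    exact isHomogeneous_X_pow i 2
  · rw [mem_homogeneousSubmodule]
    exact (isHomogeneous_X _ _).mul (isHomogeneous_X _ _)

lemma T_le_homog (m : ℕ) : T n m ≤ homogeneousSubmodule (Fin (n+1)) ℂ m := by
  rw [T, Submodule.span_le]
  rintro p ⟨α, hα, rfl⟩
  rw [SetLike.mem_coe, mem_homogeneousSubmodule]
  apply pdPow_isHomogeneous ((qForm_isHomogeneous (n := n)).pow m)
  omega

lemma one_mem_T0 : (1 : MvPolynomial (Fin (n+1)) ℂ) ∈ T n 0 := by
  apply Submodule.subset_span
  refine ⟨0, by simp, ?_⟩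
  rw [pow_zero, show (1 : MvPolynomial (Fin (n+1)) ℂ) = monomial 0 1 from by
    rw [monomial_zero', C_1], pdPow_monomial]
  simp

lemma homog_le_T (hn : 1 ≤ n) (m : ℕ) : homogeneousSubmodule (Fin (n+1)) ℂ m ≤ T n m := by
  induction m with
  | zero =>
    intro f hf
    rw [mem_homogeneousSubmodule] at hf
    rw [show f = ∑ v ∈ f.support, monomial v (coeff v f) from f.as_sum]
    apply Submodule.sum_mem
    intro β hβ
    have hb0 : β = 0 := by
      have hd := hf (mem_support_iff.1 hβ)
      rw [Pi.one_def, ← Finsupp.degree_eq_weight_one, degree_univ_sum] at hd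
      ext x
      simp only [Finsupp.coe_zero, Pi.zero_apply]
      have hle : β x ≤ ∑ i, β i :=
        Finset.single_le_sum (f := fun i => β i) (fun _ _ => Nat.zero_le _) (Finset.mem_univ x)
      omega
    rw [hb0, monomial_zero', show C (coeff 0 f) = (coeff 0 f) • (1 : MvPolynomial (Fin (n+1)) ℂ)
      from by rw [← mul_one (C (coeff 0 f)), C_mul']]
    exact Submodule.smul_mem _ _ one_mem_T0
  | succ m ih =>
    intro f hf
    rw [mem_homogeneousSubmodule] at hf
    rw [show f = ∑ v ∈ f.support, monomial v (coeff v f) from f.as_sum]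
    apply Submodule.sum_mem
    intro β hβ
    have hdeg : (∑ i, β i) = m + 1 := by
      have hd := hf (mem_support_iff.1 hβ)
      rwa [Pi.one_def, ← Finsupp.degree_eq_weight_one, degree_univ_sum] at hd
    obtain ⟨j, hj⟩ : ∃ j, β j ≠ 0 := by
      by_contra hall
      push_neg at hall
      simp only [hall, Finset.sum_const_zero] at hdeg
      omega
    have hβsub : (∑ i, (β - Finsupp.single j 1 : Fin (n+1) →₀ ℕ) i) = m := by
      have hsum : (∑ x, (β - Finsupp.single j 1 : Fin (n+1) →₀ ℕ) x)
          + (∑ x, (Finsupp.single j 1 : Fin (n+1) →₀ ℕ) x) = ∑ x, β x := by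
        rw [← Finset.sum_add_distrib]
        apply Finset.sum_congr rfl
        intro x _
        rw [Finsupp.tsub_apply, Finsupp.single_apply]
        by_cases hx : j = x
        · rw [if_pos hx]
          subst hx
          omega
        · rw [if_neg hx]
          omega
      rw [wt_single] at hsum
      omega
    have hexp : Finsupp.single j 1 + (β - Finsupp.single j 1) = β := by
      ext x
      rw [Finsupp.add_apply, Finsupp.tsub_apply, Finsupp.single_apply]
      by_cases hx : j = x
      · rw [if_pos hx]
        subst hx
        omega
      · rw [if_neg hx]
        omega
    have hmono : monomial β (coeff β f)
        = (coeff β f) • (X j * monomial (β - Finsupp.single j 1) 1) := by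
      rw [show (X j : MvPolynomial (Fin (n+1)) ℂ) * monomial (β - Finsupp.single j 1) 1
          = X j ^ 1 * monomial (β - Finsupp.single j 1) 1 from by rw [pow_one],
        ← monomial_single_add, hexp, smul_monomial, smul_eq_mul, mul_one]
    rw [hmono]
    apply Submodule.smul_mem
    have hν : monomial (β - Finsupp.single j 1) 1 ∈ T n m := by
      apply ih
      rw [mem_homogeneousSubmodule]
      apply isHomogeneous_monomial
      rw [degree_univ_sum]
      exact hβsub
    have key : ∀ p ∈ T n m, X j * p ∈ T n (m+1) := by
      intro p hp
      rw [T] at hp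
      induction hp using Submodule.span_induction with
      | mem x hx =>
        obtain ⟨γ, hγ, rfl⟩ := hx
        exact X_mul_mem hn hγ j
      | zero => rw [mul_zero]; exact Submodule.zero_mem _
      | add x y _ _ hx hy => rw [mul_add]; exact Submodule.add_mem _ hx hy
      | smul c x _ hx => rw [mul_smul_comm]; exact Submodule.smul_mem _ _ hx
    exact key _ hν

lemma card_toM {N : ℕ} (d : Fin N →₀ ℕ) : (Finsupp.toMultiset d).card = d.degree := by
  rw [Finsupp.card_toMultiset]
  rfl

set_option maxHeartbeats 1000000 in
lemma finrank_homog (n r : ℕ) :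
    Module.finrank ℂ (homogeneousSubmodule (Fin (n+1)) ℂ r) = (n + r).choose n := by
  classical
  let E : (({d : Fin (n+1) →₀ ℕ | d.degree = r} : Set (Fin (n+1) →₀ ℕ)))
      ≃ Sym (Fin (n+1)) r :=
    { toFun := fun d => ⟨Finsupp.toMultiset d.1, by rw [card_toM]; exact d.2⟩
      invFun := fun s => ⟨Multiset.toFinsupp s.1, by
        have h := s.2
        show (Multiset.toFinsupp s.1).degree = r
        rw [← card_toM, Multiset.toFinsupp_toMultiset]
        exact h⟩
      left_inv := fun d => by
        apply Subtype.ext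
        simp
      right_inv := fun s => by
        apply Subtype.ext
        simp }
  haveI : Fintype (({d : Fin (n+1) →₀ ℕ | d.degree = r} : Set (Fin (n+1) →₀ ℕ))) :=
    Fintype.ofEquiv _ E.symm
  have hcard : Fintype.card (({d : Fin (n+1) →₀ ℕ | d.degree = r} : Set (Fin (n+1) →₀ ℕ)))
      = (n + r).choose n := by
    rw [Fintype.card_congr E, Sym.card_sym_eq_choose, Fintype.card_fin,
      show n + 1 + r - 1 = n + r from by omega,
      ← Nat.choose_symm (show r ≤ n + r from by omega),
      show n + r - r = n from by omega]
  rw [homogeneousSubmodule_eq_finsupp_supported]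
  rw [(AddMonoidAlgebra.supportedEquivFinsupp
    ({d : Fin (n+1) →₀ ℕ | d.degree = r} : Set (Fin (n+1) →₀ ℕ))).finrank_eq]
  rw [Module.finrank_finsupp_self]
  exact hcard

end PdAux

open PdAux in
/-- The span of the iterated partials `∂^α(q^r)` with `|α| = r` is the space of all
homogeneous polynomials of degree `r`; in particular its dimension is `binom(n+r,n)`,
the catalecticant rank of `q^r` in order `r`. -/
theorem statement0 (n r : ℕ) (hn : 1 ≤ n) (hr : 1 ≤ r) :
    Submodule.span ℂ
        {p : MvPolynomial (Fin (n + 1)) ℂ |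
          ∃ α : Fin (n + 1) →₀ ℕ, (∑ i, α i) = r ∧ p = pdPow α (qForm n ^ r)}
      = homogeneousSubmodule (Fin (n + 1)) ℂ r ∧
    Module.finrank ℂ
        (Submodule.span ℂ
          {p : MvPolynomial (Fin (n + 1)) ℂ |
            ∃ α : Fin (n + 1) →₀ ℕ, (∑ i, α i) = r ∧ p = pdPow α (qForm n ^ r)})
      = (n + r).choose n := by
  have hspan : Submodule.span ℂ
      {p : MvPolynomial (Fin (n + 1)) ℂ |
        ∃ α : Fin (n + 1) →₀ ℕ, (∑ i, α i) = r ∧ p = pdPow α (qForm n ^ r)}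
      = homogeneousSubmodule (Fin (n + 1)) ℂ r :=
    le_antisymm (T_le_homog r) (homog_le_T hn r)
  refine ⟨hspan, ?_⟩
  rw [hspan, finrank_homog]
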